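/- Let G and H be finite groups, let N be a soluble (solvable) normal subgroup of H with gcd(|N|, |G|) = 1, and let f : G → H/N be a group homomorphism. If f₁, f₂ : G → H are two group homomorphisms lifting f (i.e., each composed with the projection H → H/N equals f), then f₁ and f₂ are conjugate by an element of N: there exists n ∈ N such that f₁(x) = n⁻¹ f₂(x) n for all x ∈ G. -/

import Mathlib

open Subgroup Finset
open scoped commutatorElement

private lemma lifts_conj_abelian {G H : Type*} [Group G] [Group H]
    [Finite G] (N : Subgroup H) [hN : N.Normal]
    (hab : ∀ a b : ↥N, a * b = b * a)
    (hcop : Nat.Coprime (Nat.card N) (Nat.card G))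
    (f₁ f₂ : G →* H)
    (hmem : ∀ x : G, f₂ x * (f₁ x)⁻¹ ∈ N) :
    ∃ n ∈ N, ∀ x : G, f₁ x = n⁻¹ * f₂ x * n := by
  letI : Fintype G := Fintype.ofFinite G
  letI : CommGroup ↥N := { (inferInstance : Group ↥N) with mul_comm := hab }
  set c : G → ↥N := fun x => ⟨f₂ x * (f₁ x)⁻¹, hmem x⟩ with hcdef
  set a : G → (↥N →* ↥N) := fun x =>
    { toFun := fun n => ⟨f₁ x * ↑n * (f₁ x)⁻¹, hN.conj_mem _ n.2 _⟩
      map_one' := by ext; simp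
      map_mul' := fun n m => by ext; simp [mul_assoc] } with hadef
  have hcoc : ∀ x y : G, c (x * y) = c x * a x (c y) := by
    intro x y
    ext
    show f₂ (x * y) * (f₁ (x * y))⁻¹ =
      (f₂ x * (f₁ x)⁻¹) * (f₁ x * (f₂ y * (f₁ y)⁻¹) * (f₁ x)⁻¹)
    rw [map_mul, map_mul]
    group
  set S : ↥N := ∏ y : G, c y with hSdef
  have key : ∀ x : G, c x ^ Nat.card G * a x S = S := by
    intro x
    have h1 : ∏ y : G, c (x * y) = S := Fintype.prod_equiv (Equiv.mulLeft x) _ _ (fun y => rfl)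
    calc c x ^ Nat.card G * a x S
        = (∏ _y : G, c x) * ∏ y : G, a x (c y) := by
          rw [prod_const, card_univ, Nat.card_eq_fintype_card, map_prod]
      _ = ∏ y : G, c (x * y) := by rw [← prod_mul_distrib]; simp_rw [hcoc]
      _ = S := h1
  have hcop' : (Nat.card ↥N).Coprime (Nat.card G) := hcop
  set e := powCoprime hcop' with hedef
  set n' : ↥N := e.symm S with hn'def
  have hn' : n' ^ Nat.card G = S := by
    have := e.apply_symm_apply S
    rwa [hedef, powCoprime_apply] at this
  have hcx : ∀ x : G, c x = n' * (a x n')⁻¹ := by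
    intro x
    apply e.injective
    show c x ^ Nat.card G = (n' * (a x n')⁻¹) ^ Nat.card G
    rw [mul_pow, inv_pow, ← map_pow (a x) n' (Nat.card G), hn', eq_mul_inv_iff_mul_eq]
    exact key x
  refine ⟨(n' : H), n'.2, fun x => ?_⟩
  have h := congrArg (Subtype.val : ↥N → H) (hcx x)
  have h' : f₂ x * (f₁ x)⁻¹ = ↑n' * (f₁ x * ↑n' * (f₁ x)⁻¹)⁻¹ := h
  have h2 : f₂ x = ↑n' * f₁ x * (↑n')⁻¹ := by
    conv_lhs => rw [← mul_one (f₂ x), ← inv_mul_cancel (f₁ x), ← mul_assoc]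
    rw [h']; group
  rw [h2]; group

private lemma lifts_conj_general {G H : Type*} [Group G] [Group H] [Finite G] [Finite H] :
    ∀ (k : ℕ) (N : Subgroup H), N.Normal → IsSolvable N →
      Nat.Coprime (Nat.card N) (Nat.card G) → ∀ (f₁ f₂ : G →* H),
      (∀ x : G, f₂ x * (f₁ x)⁻¹ ∈ N) → Nat.card N ≤ k →
      ∃ n ∈ N, ∀ x : G, f₁ x = n⁻¹ * f₂ x * n := by
  intro k
  induction k with
  | zero =>
    intro N _ _ _ _ _ _ hle
    exact absurd (lt_of_lt_of_le Nat.card_pos hle) (by simp)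
  | succ k ih =>
    intro N hNnorm hsol hcop f₁ f₂ hmem hle
    haveI : N.Normal := hNnorm
    by_cases hcomm : ⁅N, N⁆ = N
    · -- then N is trivial, hence abelian
      have htop : commutator ↥N = ⊤ := by
        apply Subgroup.map_injective N.subtype_injective
        rw [commutator_def, Subgroup.map_commutator, ← MonoidHom.range_eq_map,
          N.range_subtype, hcomm]
      have hbot : (⊤ : Subgroup ↥N) = ⊥ := by
        obtain ⟨n, hn⟩ := hsol.solvable
        have hall : ∀ m : ℕ, derivedSeries ↥N m = ⊤ := by
          intro m
          induction m with
          | zero => rfl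
          | succ m ihm => rw [derivedSeries_succ, ihm, ← commutator_def, htop]
        rw [← hn, hall n]
      have hab : ∀ a b : ↥N, a * b = b * a := by
        intro a b
        have ha : a ∈ (⊥ : Subgroup ↥N) := hbot ▸ mem_top a
        have hb : b ∈ (⊥ : Subgroup ↥N) := hbot ▸ mem_top b
        rw [mem_bot] at ha hb
        rw [ha, hb]
      exact lifts_conj_abelian N hab hcop f₁ f₂ hmem
    · set N' : Subgroup H := ⁅N, N⁆ with hN'def
      have hN'le : N' ≤ N := commutator_le.mpr fun g hg h hh =>
        N.mul_mem (N.mul_mem (N.mul_mem hg hh) (N.inv_mem hg)) (N.inv_mem hh)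
      haveI hN'norm : N'.Normal := Subgroup.commutator_normal N N
      have hcard : Nat.card N' ≤ k := by
        have hdvd : Nat.card N' ∣ Nat.card N := Subgroup.card_dvd_of_le hN'le
        have hne : Nat.card N' ≠ Nat.card N := fun h =>
          hcomm (Subgroup.eq_of_le_of_card_ge hN'le h.ge)
        have := lt_of_le_of_ne (Nat.le_of_dvd Nat.card_pos hdvd) hne
        omega
      set π := QuotientGroup.mk' N' with hπdef
      set M : Subgroup (H ⧸ N') := N.map π with hMdef
      haveI hMnorm : M.Normal := hNnorm.map π (QuotientGroup.mk'_surjective N')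
      have habM : ∀ a b : ↥M, a * b = b * a := by
        rintro ⟨a, ha⟩ ⟨b, hb⟩
        obtain ⟨x, hx, rfl⟩ := ha
        obtain ⟨y, hy, rfl⟩ := hb
        ext
        show π x * π y = π y * π x
        rw [← map_mul, ← map_mul]
        refine (QuotientGroup.mk'_eq_mk' N').mpr ⟨⁅y⁻¹, x⁻¹⁆, commutator_mem_commutator
          (N.inv_mem hy) (N.inv_mem hx), ?_⟩
        rw [commutatorElement_def]
        group
      have hcopM : Nat.Coprime (Nat.card M) (Nat.card G) := by
        refine Nat.Coprime.coprime_dvd_left ?_ hcop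
        exact Subgroup.card_dvd_of_surjective (π.subgroupMap N)
          (π.subgroupMap_surjective N)
      have hmemM : ∀ x : G, (π.comp f₂) x * ((π.comp f₁) x)⁻¹ ∈ M := by
        intro x
        refine ⟨f₂ x * (f₁ x)⁻¹, hmem x, ?_⟩
        rw [map_mul, map_inv]
        rfl
      obtain ⟨nb, hnbM, hnb⟩ := lifts_conj_abelian M habM hcopM (π.comp f₁) (π.comp f₂) hmemM
      obtain ⟨n, hnN, rfl⟩ := hnbM
      set f₃ : G →* H := (MulAut.conj n⁻¹).toMonoidHom.comp f₂ with hf₃def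
      have hf₃ : ∀ x : G, f₃ x = n⁻¹ * f₂ x * n := by
        intro x
        show n⁻¹ * f₂ x * n⁻¹⁻¹ = n⁻¹ * f₂ x * n
        rw [inv_inv]
      have hmem3 : ∀ x : G, f₃ x * (f₁ x)⁻¹ ∈ N' := by
        intro x
        have h := hnb x
        have h1 : π (f₃ x * (f₁ x)⁻¹) = 1 := by
          rw [map_mul, map_inv, hf₃, map_mul, map_mul, map_inv]
          simp only [MonoidHom.comp_apply] at h
          rw [← h]
          group
        have h2 := (MonoidHom.mem_ker (f := π)).mpr h1
        rwa [QuotientGroup.ker_mk'] at h2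
      haveI : Group.IsSolvable ↥N := hsol
      have hsol' : IsSolvable ↥N' :=
        solvable_of_solvable_injective (Subgroup.inclusion_injective hN'le)
      have hcop' : Nat.Coprime (Nat.card N') (Nat.card G) :=
        Nat.Coprime.coprime_dvd_left (Subgroup.card_dvd_of_le hN'le) hcop
      obtain ⟨m, hmN', hm⟩ := ih N' hN'norm hsol' hcop' f₁ f₃ hmem3 hcard
      refine ⟨n * m, N.mul_mem hnN (hN'le hmN'), fun x => ?_⟩
      rw [hm x, hf₃ x]
      group

/-- If `N ⊴ H` is a soluble normal subgroup with `|N|` coprime to `|G|`, then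
any two homomorphisms `f₁, f₂ : G → H` lifting the same homomorphism
`f : G → H/N` are conjugate by an element of `N`. -/
theorem lifts_conjugate_solvable_kernel {G H : Type*} [Group G] [Group H]
    [Finite G] [Finite H] (N : Subgroup H) [N.Normal]
    (hsol : IsSolvable N)
    (hcop : Nat.Coprime (Nat.card N) (Nat.card G))
    (f : G →* H ⧸ N) (f₁ f₂ : G →* H)
    (h₁ : (QuotientGroup.mk' N).comp f₁ = f)
    (h₂ : (QuotientGroup.mk' N).comp f₂ = f) :
    ∃ n ∈ N, ∀ x : G, f₁ x = n⁻¹ * f₂ x * n := by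
  have hmem : ∀ x : G, f₂ x * (f₁ x)⁻¹ ∈ N := by
    intro x
    have hx : QuotientGroup.mk' N (f₁ x) = QuotientGroup.mk' N (f₂ x) := by
      rw [← MonoidHom.comp_apply, ← MonoidHom.comp_apply, h₁, h₂]
    obtain ⟨z, hz, hz'⟩ := (QuotientGroup.mk'_eq_mk' N).mp hx
    have : (f₁ x)⁻¹ * f₂ x ∈ N := by
      have : z = (f₁ x)⁻¹ * f₂ x := by rw [← hz']; group
      rwa [← this]
    exact (Subgroup.Normal.mem_comm_iff inferInstance).mp this
  exact lifts_conj_general (Nat.card N) N inferInstance hsol hcop f₁ f₂ hmem le_rfl
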